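/- Algorithmic strengthening for void entries: if Γ₁, x : ∘ ⊢ P ▷ Γ₂, x : ∘ is derivable, then Γ₁ ⊢ P ▷ Γ₂ is derivable; moreover, if Γ₁, x : (∘, N) ⊢ P ▷ Γ₂, x : (∘, N') is derivable, then Γ₁, x : N ⊢ P ▷ Γ₂, x : N' is derivable, and symmetrically for (M, ∘). -/
import Mathlib


/-! Qualified session types for the pi calculus (Giunti),
    algorithmic type checking and split-based declarative system. -/

inductive Qual : Type
| lin : Qual
| un : Qual

mutual
inductive PreTy : Type
| recv : Ty → EpTy → PreTy
| send : Ty → EpTy → PreTy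
| ende : PreTy
inductive EpTy : Type
| q : Qual → PreTy → EpTy
| var : Nat → EpTy
| mu : EpTy → EpTy
inductive Ty : Type
| ep : EpTy → Ty
| ch : EpTy → EpTy → Ty
end

mutual
def PreTy.subst : PreTy → Nat → EpTy → PreTy
| .recv T S, n, R => .recv (T.subst n R) (S.subst n R)
| .send T S, n, R => .send (T.subst n R) (S.subst n R)
| .ende, _, _ => .ende
def EpTy.subst : EpTy → Nat → EpTy → EpTy
| .q qu p, n, R => .q qu (p.subst n R)
| .var a, n, R => if a = n then R else .var a
| .mu S, n, R => .mu (S.subst (n+1) R)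
def Ty.subst : Ty → Nat → EpTy → Ty
| .ep S, n, R => .ep (S.subst n R)
| .ch S1 S2, n, R => .ch (S1.subst n R) (S2.subst n R)
end

/-- Equi-recursive unfolding of an end-point type to a head (qualified) form. -/
inductive Unf : EpTy → EpTy → Prop
| refl (q p) : Unf (.q q p) (.q q p)
| mu {S S'} : Unf (S.subst 0 (.mu S)) S' → Unf (.mu S) S'

/-- Algorithmic entries: an end-point type or the void marker. -/
inductive Entry : Type
| ep : EpTy → Entry
| void : Entry

/-- A context entry: a single entry or a channel pair of entries. -/
inductive CEntry : Type
| single : Entry → CEntry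
| chan : Entry → Entry → CEntry

def Ty.toC : Ty → CEntry
| .ep S => .single (.ep S)
| .ch S1 S2 => .chan (.ep S1) (.ep S2)

def unEnd : Entry := .ep (.q .un .ende)

/-- Safety predicate on context entries. -/
inductive SafeC : CEntry → Prop
| single (M) : SafeC (.single M)
| voidL (N) : SafeC (.chan .void N)
| voidR (M) : SafeC (.chan M .void)
| endL (N) : SafeC (.chan unEnd N)
| endR (M) : SafeC (.chan M unEnd)
| linlin {T : Ty} {S1 S2 : EpTy} : SafeC T.toC → SafeC (.chan (.ep S1) (.ep S2)) →
    SafeC (.chan (.ep (.q .lin (.recv T S1))) (.ep (.q .lin (.send T S2))))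
| unun {T : Ty} {S1 S2 : EpTy} : SafeC T.toC →
    SafeC (.chan (.ep (.q .un (.recv T S1))) (.ep (.q .un (.send T S2))))

/-- Unrestricted entries. -/
inductive UnE : Entry → Prop
| void : UnE .void
| un (p) : UnE (.ep (.q .un p))

def UnC : CEntry → Prop
| .single M => UnE M
| .chan M N => UnE M ∧ UnE N

/-- Pi-calculus processes with annotated restriction. -/
inductive Proc : Type
| nil : Proc
| par : Proc → Proc → Proc
| repl : Proc → Proc
| nu : String → Ty → Proc → Proc
| out : String → String → Proc → Proc
| inp : String → String → Proc → Proc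

/-- Free variables of a process. -/
def fv : Proc → Set String
| .nil => ∅
| .par P Q => fv P ∪ fv Q
| .repl P => fv P
| .nu x _ P => fv P \ {x}
| .out x y P => {x} ∪ ({y} ∪ fv P)
| .inp x y P => {x} ∪ (fv P \ {y})

/-- Algorithmic typing contexts. -/
abbrev Ctx := String → Option CEntry

def Ctx.upd (Γ : Ctx) (x : String) (E : CEntry) : Ctx :=
  fun y => if y = x then some E else Γ y

def Ctx.del (Γ : Ctx) (x : String) : Ctx :=
  fun y => if y = x then none else Γ y

def SafeCtx (Γ : Ctx) : Prop := ∀ x E, Γ x = some E → SafeC E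
def UnCtx (Γ : Ctx) : Prop := ∀ x E, Γ x = some E → UnC E

/-- Algorithmic value-checking judgment Γ ⊢ x : T ▷ Γ'. -/
inductive CheckVar : Ctx → String → Ty → Ctx → Prop
| vL {Γ : Ctx} {x p} : Γ x = some (.single (.ep (.q .lin p))) →
    CheckVar Γ x (.ep (.q .lin p)) (Γ.upd x (.single .void))
| vU {Γ : Ctx} {x p} : Γ x = some (.single (.ep (.q .un p))) →
    CheckVar Γ x (.ep (.q .un p)) Γ
| vLLl {Γ : Ctx} {x p1 p2} : Γ x = some (.chan (.ep (.q .lin p1)) (.ep (.q .lin p2))) →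
    CheckVar Γ x (.ch (.q .lin p1) (.q .lin p2)) (Γ.upd x (.chan .void .void))
| vLLr {Γ : Ctx} {x p1 p2} : Γ x = some (.chan (.ep (.q .lin p1)) (.ep (.q .lin p2))) →
    CheckVar Γ x (.ch (.q .lin p2) (.q .lin p1)) (Γ.upd x (.chan .void .void))
| vLl {Γ : Ctx} {x p N} : Γ x = some (.chan (.ep (.q .lin p)) N) →
    CheckVar Γ x (.ep (.q .lin p)) (Γ.upd x (.chan .void N))
| vLr {Γ : Ctx} {x p M} : Γ x = some (.chan M (.ep (.q .lin p))) →
    CheckVar Γ x (.ep (.q .lin p)) (Γ.upd x (.chan M .void))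
| vUUl {Γ : Ctx} {x p1 p2} : Γ x = some (.chan (.ep (.q .un p1)) (.ep (.q .un p2))) →
    CheckVar Γ x (.ch (.q .un p1) (.q .un p2)) Γ
| vUUr {Γ : Ctx} {x p1 p2} : Γ x = some (.chan (.ep (.q .un p1)) (.ep (.q .un p2))) →
    CheckVar Γ x (.ch (.q .un p2) (.q .un p1)) Γ
| vUl {Γ : Ctx} {x p N} : Γ x = some (.chan (.ep (.q .un p)) N) → N ≠ .ep (.q .un p) →
    CheckVar Γ x (.ep (.q .un p)) Γ
| vUr {Γ : Ctx} {x p M} : Γ x = some (.chan M (.ep (.q .un p))) → M ≠ .ep (.q .un p) →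
    CheckVar Γ x (.ep (.q .un p)) Γ
| vEE {Γ : Ctx} {x} : Γ x = some (.chan unEnd unEnd) →
    CheckVar Γ x (.ep (.q .un .ende)) Γ

/-- Algorithmic process-checking judgment Γ₁ ⊢ P ▷ Γ₂. -/
inductive Check : Ctx → Proc → Ctx → Prop
| inact (Γ : Ctx) : Check Γ .nil Γ
| par {Γ1 Γ2 Γ3 : Ctx} {P Q} : Check Γ1 P Γ2 → Check Γ2 Q Γ3 →
    Check Γ1 (.par P Q) Γ3
| repl {Γ : Ctx} {P} : Check Γ P Γ → Check Γ (.repl P) Γ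
| res {Γ1 Γ2 : Ctx} {y T P O} : SafeC (Ty.toC T) → Γ1 y = none →
    Check (Γ1.upd y T.toC) P Γ2 → Γ2 y = some O → UnC O →
    Check Γ1 (.nu y T P) (Γ2.del y)
| outL {Γ1 Γ2 Γ3 : Ctx} {x y T S P M} :
    Γ1 x = some (.single (.ep (.q .lin (.send T S)))) →
    CheckVar (Γ1.upd x (.single .void)) y T Γ2 →
    Check (Γ2.upd x (.single (.ep S))) P Γ3 →
    Γ3 x = some (.single M) → UnE M →
    Check Γ1 (.out x y P) (Γ3.upd x (.single .void))
| outLl {Γ1 Γ2 : Ctx} {x y T S N P} :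
    Γ1 x = some (.chan (.ep (.q .lin (.send T S))) N) →
    Check (Γ1.upd x (.single (.ep (.q .lin (.send T S))))) (.out x y P) Γ2 →
    Γ2 x = some (.single .void) →
    Check Γ1 (.out x y P) (Γ2.upd x (.chan .void N))
| outLr {Γ1 Γ2 : Ctx} {x y T S M P} :
    Γ1 x = some (.chan M (.ep (.q .lin (.send T S)))) →
    Check (Γ1.upd x (.single (.ep (.q .lin (.send T S))))) (.out x y P) Γ2 →
    Γ2 x = some (.single .void) →
    Check Γ1 (.out x y P) (Γ2.upd x (.chan M .void))
| outUn {Γ1 Γ2 Γ3 : Ctx} {x y T S P} :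
    Γ1 x = some (.single (.ep S)) → Unf S (.q .un (.send T S)) →
    CheckVar Γ1 y T Γ2 → Check Γ2 P Γ3 →
    Check Γ1 (.out x y P) Γ3
| outUnl {Γ1 Γ2 Γ3 : Ctx} {x y T S N P} :
    Γ1 x = some (.chan (.ep S) N) → Unf S (.q .un (.send T S)) →
    CheckVar Γ1 y T Γ2 → Check Γ2 P Γ3 →
    Check Γ1 (.out x y P) Γ3
| outUnr {Γ1 Γ2 Γ3 : Ctx} {x y T S M P} :
    Γ1 x = some (.chan M (.ep S)) → Unf S (.q .un (.send T S)) →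
    CheckVar Γ1 y T Γ2 → Check Γ2 P Γ3 →
    Check Γ1 (.out x y P) Γ3
| inL {Γ1 Γ2 : Ctx} {x y T S P M O} :
    Γ1 x = some (.single (.ep (.q .lin (.recv T S)))) → Γ1 y = none →
    Check ((Γ1.upd x (.single (.ep S))).upd y T.toC) P Γ2 →
    Γ2 x = some (.single M) → UnE M → Γ2 y = some O → UnC O →
    Check Γ1 (.inp x y P) ((Γ2.del y).upd x (.single .void))
| inLl {Γ1 Γ2 : Ctx} {x y T S N P} :
    Γ1 x = some (.chan (.ep (.q .lin (.recv T S))) N) →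
    Check (Γ1.upd x (.single (.ep (.q .lin (.recv T S))))) (.inp x y P) Γ2 →
    Γ2 x = some (.single .void) →
    Check Γ1 (.inp x y P) (Γ2.upd x (.chan .void N))
| inLr {Γ1 Γ2 : Ctx} {x y T S M P} :
    Γ1 x = some (.chan M (.ep (.q .lin (.recv T S)))) →
    Check (Γ1.upd x (.single (.ep (.q .lin (.recv T S))))) (.inp x y P) Γ2 →
    Γ2 x = some (.single .void) →
    Check Γ1 (.inp x y P) (Γ2.upd x (.chan M .void))
| inUn {Γ1 Γ2 : Ctx} {x y T S P O} :
    Γ1 x = some (.single (.ep S)) → Unf S (.q .un (.recv T S)) → Γ1 y = none →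
    Check (Γ1.upd y T.toC) P Γ2 → Γ2 y = some O → UnC O →
    Check Γ1 (.inp x y P) (Γ2.del y)
| inUnl {Γ1 Γ2 : Ctx} {x y T S N P O} :
    Γ1 x = some (.chan (.ep S) N) → Unf S (.q .un (.recv T S)) → Γ1 y = none →
    Check (Γ1.upd y T.toC) P Γ2 → Γ2 y = some O → UnC O →
    Check Γ1 (.inp x y P) (Γ2.del y)
| inUnr {Γ1 Γ2 : Ctx} {x y T S M P O} :
    Γ1 x = some (.chan M (.ep S)) → Unf S (.q .un (.recv T S)) → Γ1 y = none →
    Check (Γ1.upd y T.toC) P Γ2 → Γ2 y = some O → UnC O →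
    Check Γ1 (.inp x y P) (Γ2.del y)

/-- One step of the algorithm: check(Γ,P) directly invokes check(Γ',P'). -/
inductive Invokes : Ctx → Proc → Ctx → Proc → Prop
| par1 {Γ : Ctx} (P Q) : Invokes Γ (.par P Q) Γ P
| par2 {Γ Γ2 : Ctx} {P} (Q) : Check Γ P Γ2 → Invokes Γ (.par P Q) Γ2 Q
| repl {Γ : Ctx} (P) : Invokes Γ (.repl P) Γ P
| res {Γ : Ctx} {y T P} : SafeC (Ty.toC T) → Γ y = none →
    Invokes Γ (.nu y T P) (Γ.upd y T.toC) P
| outL {Γ Γ2 : Ctx} {x y T S P} :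
    Γ x = some (.single (.ep (.q .lin (.send T S)))) →
    CheckVar (Γ.upd x (.single .void)) y T Γ2 →
    Invokes Γ (.out x y P) (Γ2.upd x (.single (.ep S))) P
| outLl {Γ : Ctx} {x y T S N P} :
    Γ x = some (.chan (.ep (.q .lin (.send T S))) N) →
    Invokes Γ (.out x y P) (Γ.upd x (.single (.ep (.q .lin (.send T S))))) (.out x y P)
| outLr {Γ : Ctx} {x y T S M P} :
    Γ x = some (.chan M (.ep (.q .lin (.send T S)))) →
    Invokes Γ (.out x y P) (Γ.upd x (.single (.ep (.q .lin (.send T S))))) (.out x y P)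
| outUn {Γ Γ2 : Ctx} {x y T S P} :
    Γ x = some (.single (.ep S)) → Unf S (.q .un (.send T S)) →
    CheckVar Γ y T Γ2 → Invokes Γ (.out x y P) Γ2 P
| outUnl {Γ Γ2 : Ctx} {x y T S N P} :
    Γ x = some (.chan (.ep S) N) → Unf S (.q .un (.send T S)) →
    CheckVar Γ y T Γ2 → Invokes Γ (.out x y P) Γ2 P
| outUnr {Γ Γ2 : Ctx} {x y T S M P} :
    Γ x = some (.chan M (.ep S)) → Unf S (.q .un (.send T S)) →
    CheckVar Γ y T Γ2 → Invokes Γ (.out x y P) Γ2 P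
| inL {Γ : Ctx} {x y T S P} :
    Γ x = some (.single (.ep (.q .lin (.recv T S)))) → Γ y = none →
    Invokes Γ (.inp x y P) ((Γ.upd x (.single (.ep S))).upd y T.toC) P
| inLl {Γ : Ctx} {x y T S N P} :
    Γ x = some (.chan (.ep (.q .lin (.recv T S))) N) →
    Invokes Γ (.inp x y P) (Γ.upd x (.single (.ep (.q .lin (.recv T S))))) (.inp x y P)
| inLr {Γ : Ctx} {x y T S M P} :
    Γ x = some (.chan M (.ep (.q .lin (.recv T S)))) →
    Invokes Γ (.inp x y P) (Γ.upd x (.single (.ep (.q .lin (.recv T S))))) (.inp x y P)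
| inUn {Γ : Ctx} {x y T S P} :
    Γ x = some (.single (.ep S)) → Unf S (.q .un (.recv T S)) → Γ y = none →
    Invokes Γ (.inp x y P) (Γ.upd y T.toC) P
| inUnl {Γ : Ctx} {x y T S N P} :
    Γ x = some (.chan (.ep S) N) → Unf S (.q .un (.recv T S)) → Γ y = none →
    Invokes Γ (.inp x y P) (Γ.upd y T.toC) P
| inUnr {Γ : Ctx} {x y T S M P} :
    Γ x = some (.chan M (.ep S)) → Unf S (.q .un (.recv T S)) → Γ y = none →
    Invokes Γ (.inp x y P) (Γ.upd y T.toC) P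

/-- check(Γ',P') is (reflexively-transitively) invoked during check(Γ,P). -/
def Reaches : Ctx × Proc → Ctx × Proc → Prop :=
  Relation.ReflTransGen (fun a b => Invokes a.1 a.2 b.1 b.2)

/-! ### The split-based declarative system ⊢_D -/

abbrev DCtx := String → Option Ty

def DCtx.upd (I : DCtx) (x : String) (T : Ty) : DCtx :=
  fun y => if y = x then some T else I y

def UnT : Ty → Prop
| .ep (.q .un _) => True
| .ch (.q .un _) (.q .un _) => True
| _ => False

def UnD (I : DCtx) : Prop := ∀ x T, I x = some T → UnT T

/-- Context-splitting, entrywise. -/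
inductive SplitE : Option Ty → Option Ty → Option Ty → Prop
| none : SplitE none none none
| unEp (p) : SplitE (some (.ep (.q .un p))) (some (.ep (.q .un p))) (some (.ep (.q .un p)))
| unCh (p1 p2) : SplitE (some (.ch (.q .un p1) (.q .un p2)))
    (some (.ch (.q .un p1) (.q .un p2))) (some (.ch (.q .un p1) (.q .un p2)))
| linEpL (p) : SplitE (some (.ep (.q .lin p))) (some (.ep (.q .lin p))) none
| linEpR (p) : SplitE (some (.ep (.q .lin p))) none (some (.ep (.q .lin p)))
| linChL (p1 p2) : SplitE (some (.ch (.q .lin p1) (.q .lin p2)))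
    (some (.ch (.q .lin p1) (.q .lin p2))) none
| linChR (p1 p2) : SplitE (some (.ch (.q .lin p1) (.q .lin p2)))
    none (some (.ch (.q .lin p1) (.q .lin p2)))
| chSplit (p1 p2) : SplitE (some (.ch (.q .lin p1) (.q .lin p2)))
    (some (.ep (.q .lin p1))) (some (.ep (.q .lin p2)))
| mixL (p1 p2) : SplitE (some (.ch (.q .lin p1) (.q .un p2)))
    (some (.ch (.q .lin p1) (.q .un p2))) (some (.ep (.q .un p2)))
| mixR (p1 p2) : SplitE (some (.ch (.q .lin p1) (.q .un p2)))
    (some (.ep (.q .un p2))) (some (.ch (.q .lin p1) (.q .un p2)))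

def DSplit (I I1 I2 : DCtx) : Prop := ∀ x, SplitE (I x) (I1 x) (I2 x)

/-- Declarative value typing. -/
inductive DVal : DCtx → String → Ty → Prop
| var {I : DCtx} {x T} : I x = some T →
    (∀ y T', y ≠ x → I y = some T' → UnT T') → DVal I x T
| strength {I : DCtx} {v S p} : DVal I v (.ch S (.q .un p)) → DVal I v (.ep S)

/-- Declarative process typing I ⊢_D P. -/
inductive DTy : DCtx → Proc → Prop
| inact {I : DCtx} : UnD I → DTy I .nil
| par {I I1 I2 : DCtx} {P Q} : DSplit I I1 I2 → DTy I1 P → DTy I2 Q →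
    DTy I (.par P Q)
| repl {I : DCtx} {P} : DTy I P → UnD I → DTy I (.repl P)
| res {I : DCtx} {x T P} : I x = none → SafeC (Ty.toC T) →
    DTy (I.upd x T) P → DTy I (.nu x T P)
| inn {I : DCtx} {x y S0 qu T S P} :
    I x = some (.ep S0) → Unf S0 (.q qu (.recv T S)) → (qu = .un → S = S0) →
    I y = none → DTy ((I.upd x (.ep S)).upd y T) P →
    DTy I (.inp x y P)
| out {I I1 I2 : DCtx} {x y S0 qu T S P} :
    DSplit I I1 I2 → DVal I1 y T →
    I2 x = some (.ep S0) → Unf S0 (.q qu (.send T S)) → (qu = .un → S = S0) →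
    DTy (I2.upd x (.ep S)) P →
    DTy I (.out x y P)
| innC {I : DCtx} {x y S0 S' qu T S P} :
    I x = some (.ch S0 S') → Unf S0 (.q qu (.recv T S)) → (qu = .un → S = S0) →
    I y = none → DTy ((I.upd x (.ch S S')).upd y T) P →
    DTy I (.inp x y P)
| outC {I I1 I2 : DCtx} {x y S0 S' qu T S P} :
    DSplit I I1 I2 → DVal I1 y T →
    I2 x = some (.ch S0 S') → Unf S0 (.q qu (.send T S)) → (qu = .un → S = S0) →
    DTy (I2.upd x (.ch S S')) P →
    DTy I (.out x y P)

/-! ### Used closure, used map, nabla, and update -/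

/-- The partial used-closure operation on entries, as a relation. -/
inductive ClosE : Entry → Entry → Entry → Prop
| vv : ClosE .void .void .void
| ll (p) : ClosE (.ep (.q .lin p)) (.ep (.q .lin p)) .void
| lv (p) : ClosE (.ep (.q .lin p)) .void (.ep (.q .lin p))
| uu (p) : ClosE (.ep (.q .un p)) (.ep (.q .un p)) (.ep (.q .un p))

inductive ClosC : CEntry → CEntry → CEntry → Prop
| single {M M' O} : ClosE M M' O → ClosC (.single M) (.single M') (.single O)
| chan {M M' N N' O O'} : ClosE M M' O → ClosE N N' O' →
    ClosC (.chan M N) (.chan M' N') (.chan O O')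

/-- Δ is the used closure Γ₁ ▷ Γ₂ of contexts (defined pointwise). -/
def ClosCtx (Γ1 Γ2 Δ : Ctx) : Prop :=
  ∀ x, (Γ1 x = none ∧ Γ2 x = none ∧ Δ x = none) ∨
    ∃ E E' O, Γ1 x = some E ∧ Γ2 x = some E' ∧ ClosC E E' O ∧ Δ x = some O

def Entry.used : Entry → EpTy
| .void => .q .un .ende
| .ep S => S

def CEntry.used : CEntry → Ty
| .single M => .ep M.used
| .chan M N => .ch M.used N.used

/-- Project an algorithmic context to a declarative one via used. -/
def usedCtx (Δ : Ctx) : DCtx := fun x => (Δ x).map CEntry.used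

def Entry.isLin : Entry → Bool
| .ep (.q .lin _) => true
| _ => false

def Entry.isVoid : Entry → Bool
| .void => true
| _ => false

/-- The ∇ operation on entries. -/
def CEntry.nabla : CEntry → CEntry
| .single M => if M.isLin then .single .void else .single M
| .chan M N =>
    if (M.isLin && (N.isLin || N.isVoid)) || (N.isLin && M.isVoid)
    then .chan .void .void else .chan M N

def nablaCtx (Γ : Ctx) : Ctx := fun x => (Γ x).map CEntry.nabla

/-- The (partial) void-filling update ⊎ on entries, as a relation. -/
inductive UpdE : Entry → Entry → Entry → Prop
| void (M) : UpdE .void M M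
| same (M) : UpdE M M M

inductive UpdC : CEntry → CEntry → CEntry → Prop
| single {M N O} : UpdE M N O → UpdC (.single M) (.single N) (.single O)
| chan {M1 M2 M N1 N2 N} : UpdE M1 M2 M → UpdE N1 N2 N →
    UpdC (.chan M1 N1) (.chan M2 N2) (.chan M N)

/-- Δ = Γ₁ ⊎ Γ (pointwise update of contexts). -/
def UpdCtx (Γ1 Γ Δ : Ctx) : Prop :=
  ∀ x, (Γ1 x = none ∧ Γ x = none ∧ Δ x = none) ∨
    ∃ E E' O, Γ1 x = some E ∧ Γ x = some E' ∧ UpdC E E' O ∧ Δ x = some O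

/-- Structural congruence. -/
inductive SC : Proc → Proc → Prop
| comm (P Q) : SC (.par P Q) (.par Q P)
| assoc (P Q R) : SC (.par (.par P Q) R) (.par P (.par Q R))
| parNil (P) : SC (.par P .nil) P
| replUnfold (P) : SC (.repl P) (.par P (.repl P))
| extrude {x T P Q} : x ∉ fv Q → SC (.par (.nu x T P) Q) (.nu x T (.par P Q))
| exch (x T1 y T2 P) : SC (.nu x T1 (.nu y T2 P)) (.nu y T2 (.nu x T1 P))
| nuNilEp (x p) : SC (.nu x (.ep (.q .un p)) .nil) .nil
| nuNilCh (x p1 p2) : SC (.nu x (.ch (.q .un p1) (.q .un p2)) .nil) .nil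
| refl (P) : SC P P
| symm {P Q} : SC P Q → SC Q P
| trans {P Q R} : SC P Q → SC Q R → SC P R
| parCong {P P' Q Q'} : SC P P' → SC Q Q' → SC (.par P Q) (.par P' Q')
| replCong {P P'} : SC P P' → SC (.repl P) (.repl P')
| nuCong {P P'} (x T) : SC P P' → SC (.nu x T P) (.nu x T P')
| outCong {P P'} (x y) : SC P P' → SC (.out x y P) (.out x y P')
| inpCong {P P'} (x y) : SC P P' → SC (.inp x y P) (.inp x y P')

/-! ### Auxiliary lemmas for stmt5 -/

section Strengthening

lemma upd_at (Γ : Ctx) (x : String) (E : CEntry) : Γ.upd x E x = some E := by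
  simp [Ctx.upd]

lemma upd_ne (Γ : Ctx) {x y : String} (E : CEntry) (h : y ≠ x) : Γ.upd x E y = Γ y := by
  simp [Ctx.upd, h]

lemma del_ne (Γ : Ctx) {x y : String} (h : y ≠ x) : Γ.del x y = Γ y := by
  simp [Ctx.del, h]

lemma upd_upd (Γ : Ctx) (x : String) (E E' : CEntry) :
    (Γ.upd x E).upd x E' = Γ.upd x E' := by
  funext z; by_cases hz : z = x <;> simp [Ctx.upd, hz]

lemma upd_eq_self {Γ : Ctx} {x : String} {E : CEntry} (h : Γ x = some E) : Γ.upd x E = Γ := by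
  funext z; by_cases hz : z = x
  · subst hz; simp [Ctx.upd, h]
  · simp [Ctx.upd, hz]

def stripE : CEntry → Option CEntry
| .single .void => none
| .single (.ep S) => some (.single (.ep S))
| .chan .void N => some (.single N)
| .chan (.ep S) .void => some (.single (.ep S))
| .chan (.ep S) (.ep S') => some (.chan (.ep S) (.ep S'))

def stripCtx (x : String) (Γ : Ctx) : Ctx :=
  fun y => if y = x then (Γ x).bind stripE else Γ y

def Strippable (o : Option CEntry) : Prop :=
  o = some (.single .void) ∨ (∃ N, o = some (.chan .void N)) ∨ (∃ M, o = some (.chan M .void))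

lemma strip_ne {x y : String} (Γ : Ctx) (h : y ≠ x) : stripCtx x Γ y = Γ y := by
  simp [stripCtx, h]

lemma strip_upd_ne {x y : String} (Γ : Ctx) (E : CEntry) (h : y ≠ x) :
    stripCtx x (Γ.upd y E) = (stripCtx x Γ).upd y E := by
  funext z
  by_cases hz : z = x <;> by_cases hzy : z = y <;>
    simp_all [stripCtx, Ctx.upd]

lemma strip_del_ne {x y : String} (Γ : Ctx) (h : y ≠ x) :
    stripCtx x (Γ.del y) = (stripCtx x Γ).del y := by
  funext z
  by_cases hz : z = x <;> by_cases hzy : z = y <;>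
    simp_all [stripCtx, Ctx.del]

lemma strip_upd_at {x : String} (Γ : Ctx) {E E' : CEntry} (h : stripE E = some E') :
    stripCtx x (Γ.upd x E) = Γ.upd x E' := by
  funext z
  by_cases hz : z = x <;> simp_all [stripCtx, Ctx.upd]

lemma strip_eq_of_void {Γ : Ctx} {x : String} (h : Γ x = some (.single .void)) :
    stripCtx x Γ = Γ.del x := by
  funext z
  by_cases hz : z = x <;> simp_all [stripCtx, Ctx.del, stripE]

lemma strip_eq_chanL {Γ : Ctx} {x : String} {N : Entry} (h : Γ x = some (.chan .void N)) :
    stripCtx x Γ = Γ.upd x (.single N) := by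
  funext z
  by_cases hz : z = x <;> simp_all [stripCtx, Ctx.upd, stripE]

lemma strip_eq_chanR {Γ : Ctx} {x : String} {M : Entry} (h : Γ x = some (.chan M .void)) :
    stripCtx x Γ = Γ.upd x (.single M) := by
  cases M with
  | void => exact strip_eq_chanL h
  | ep S =>
    funext z
    by_cases hz : z = x <;> simp_all [stripCtx, Ctx.upd, stripE]

end Strengthening
section Strengthening2

lemma cv_pres {Γ1 Γ2 : Ctx} {v : String} {T : Ty} (h : CheckVar Γ1 v T Γ2)
    (x : String) (hs : Strippable (Γ1 x)) : Strippable (Γ2 x) := by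
  cases h <;> rename_i hΓ <;> try exact hs
  all_goals {
    by_cases hv : x = v
    · subst hv; rw [hΓ] at hs; simp [Strippable, Ctx.upd] at hs ⊢
    · rwa [upd_ne _ _ hv]
  }

end Strengthening2
section Strengthening3

lemma strip_cv {Γ1 Γ2 : Ctx} {v : String} {T : Ty} (h : CheckVar Γ1 v T Γ2)
    (x : String) (hs : Strippable (Γ1 x)) :
    CheckVar (stripCtx x Γ1) v T (stripCtx x Γ2) := by
  cases h with
  | vL hΓ =>
    by_cases hv : v = x
    · subst hv; rw [hΓ] at hs; simp [Strippable] at hs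
    · rw [strip_upd_ne _ _ hv]; exact .vL (by rw [strip_ne _ hv]; exact hΓ)
  | vU hΓ =>
    by_cases hv : v = x
    · subst hv; rw [hΓ] at hs; simp [Strippable] at hs
    · exact .vU (by rw [strip_ne _ hv]; exact hΓ)
  | vLLl hΓ =>
    by_cases hv : v = x
    · subst hv; rw [hΓ] at hs; simp [Strippable] at hs
    · rw [strip_upd_ne _ _ hv]; exact .vLLl (by rw [strip_ne _ hv]; exact hΓ)
  | vLLr hΓ =>
    by_cases hv : v = x
    · subst hv; rw [hΓ] at hs; simp [Strippable] at hs
    · rw [strip_upd_ne _ _ hv]; exact .vLLr (by rw [strip_ne _ hv]; exact hΓ)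
  | vLl hΓ =>
    rename_i p N
    by_cases hv : v = x
    · subst hv; rw [hΓ] at hs; simp [Strippable] at hs; subst hs
      rw [strip_eq_chanR hΓ,
        strip_upd_at _ (show stripE (.chan .void .void) = some (.single .void) from rfl)]
      have := CheckVar.vL (upd_at Γ1 v (.single (.ep (.q .lin p))))
      rwa [upd_upd] at this
    · rw [strip_upd_ne _ _ hv]; exact .vLl (by rw [strip_ne _ hv]; exact hΓ)
  | vLr hΓ =>
    rename_i p M
    by_cases hv : v = x
    · subst hv; rw [hΓ] at hs; simp [Strippable] at hs; subst hs
      rw [strip_eq_chanL hΓ,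
        strip_upd_at _ (show stripE (.chan .void .void) = some (.single .void) from rfl)]
      have := CheckVar.vL (upd_at Γ1 v (.single (.ep (.q .lin p))))
      rwa [upd_upd] at this
    · rw [strip_upd_ne _ _ hv]; exact .vLr (by rw [strip_ne _ hv]; exact hΓ)
  | vUUl hΓ =>
    by_cases hv : v = x
    · subst hv; rw [hΓ] at hs; simp [Strippable] at hs
    · exact .vUUl (by rw [strip_ne _ hv]; exact hΓ)
  | vUUr hΓ =>
    by_cases hv : v = x
    · subst hv; rw [hΓ] at hs; simp [Strippable] at hs
    · exact .vUUr (by rw [strip_ne _ hv]; exact hΓ)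
  | vUl hΓ hne =>
    rename_i p N
    by_cases hv : v = x
    · subst hv; rw [hΓ] at hs; simp [Strippable] at hs; subst hs
      rw [strip_eq_chanR hΓ]
      exact .vU (upd_at Γ1 v _)
    · exact .vUl (by rw [strip_ne _ hv]; exact hΓ) hne
  | vUr hΓ hne =>
    rename_i p M
    by_cases hv : v = x
    · subst hv; rw [hΓ] at hs; simp [Strippable] at hs; subst hs
      rw [strip_eq_chanL hΓ]
      exact .vU (upd_at Γ1 v _)
    · exact .vUr (by rw [strip_ne _ hv]; exact hΓ) hne
  | vEE hΓ =>
    by_cases hv : v = x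
    · subst hv; rw [hΓ] at hs; simp [Strippable, unEnd] at hs
    · exact .vEE (by rw [strip_ne _ hv]; exact hΓ)

end Strengthening3
section Strengthening4

lemma ck_pres {Γ1 : Ctx} {P : Proc} {Γ2 : Ctx} (h : Check Γ1 P Γ2) (x : String) :
    Strippable (Γ1 x) → Strippable (Γ2 x) := by
  induction h with
  | inact => exact id
  | par h1 h2 ih1 ih2 => exact fun hs => ih2 (ih1 hs)
  | repl h ih => exact id
  | res hS hy hsub hO hU ih =>
    rename_i Γ1 Γ2 y T P O
    intro hs
    have hxy : x ≠ y := by rintro rfl; rw [hy] at hs; simp [Strippable] at hs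
    rw [del_ne _ hxy]
    exact ih (by rwa [upd_ne _ _ hxy])
  | outL hΓ hcv hck hΓ3 hM ih =>
    rename_i Γ1 Γ2 Γ3 x0 y T S P M
    intro hs
    by_cases hx : x = x0
    · subst hx; simp [Strippable, Ctx.upd]
    · rw [upd_ne _ _ hx]
      have h2 : Strippable (Γ2 x) := cv_pres hcv x (by rwa [upd_ne _ _ hx])
      exact ih (by rwa [upd_ne _ _ hx])
  | outLl hΓ hck hΓ2 ih =>
    rename_i Γ1 Γ2 x0 y T S N P
    intro hs
    by_cases hx : x = x0
    · subst hx; simp [Strippable, Ctx.upd]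
    · rw [upd_ne _ _ hx]; exact ih (by rwa [upd_ne _ _ hx])
  | outLr hΓ hck hΓ2 ih =>
    rename_i Γ1 Γ2 x0 y T S M P
    intro hs
    by_cases hx : x = x0
    · subst hx; simp [Strippable, Ctx.upd]
    · rw [upd_ne _ _ hx]; exact ih (by rwa [upd_ne _ _ hx])
  | outUn hΓ hUnf hcv hck ih => exact fun hs => ih (cv_pres hcv x hs)
  | outUnl hΓ hUnf hcv hck ih => exact fun hs => ih (cv_pres hcv x hs)
  | outUnr hΓ hUnf hcv hck ih => exact fun hs => ih (cv_pres hcv x hs)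
  | inL hΓ hy hck hΓx hM hΓy hO ih =>
    rename_i Γ1 Γ2 x0 y T S P M O
    intro hs
    by_cases hx : x = x0
    · subst hx; simp [Strippable, Ctx.upd]
    · have hxy : x ≠ y := by rintro rfl; rw [hy] at hs; simp [Strippable] at hs
      rw [upd_ne _ _ hx, del_ne _ hxy]
      exact ih (by rwa [upd_ne _ _ hxy, upd_ne _ _ hx])
  | inLl hΓ hck hΓ2 ih =>
    rename_i Γ1 Γ2 x0 y T S N P
    intro hs
    by_cases hx : x = x0
    · subst hx; simp [Strippable, Ctx.upd]
    · rw [upd_ne _ _ hx]; exact ih (by rwa [upd_ne _ _ hx])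
  | inLr hΓ hck hΓ2 ih =>
    rename_i Γ1 Γ2 x0 y T S M P
    intro hs
    by_cases hx : x = x0
    · subst hx; simp [Strippable, Ctx.upd]
    · rw [upd_ne _ _ hx]; exact ih (by rwa [upd_ne _ _ hx])
  | inUn hΓ hUnf hy hck hΓy hO ih =>
    rename_i Γ1 Γ2 x0 y T S P O
    intro hs
    have hxy : x ≠ y := by rintro rfl; rw [hy] at hs; simp [Strippable] at hs
    rw [del_ne _ hxy]
    exact ih (by rwa [upd_ne _ _ hxy])
  | inUnl hΓ hUnf hy hck hΓy hO ih =>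
    rename_i Γ1 Γ2 x0 y T S N P O
    intro hs
    have hxy : x ≠ y := by rintro rfl; rw [hy] at hs; simp [Strippable] at hs
    rw [del_ne _ hxy]
    exact ih (by rwa [upd_ne _ _ hxy])
  | inUnr hΓ hUnf hy hck hΓy hO ih =>
    rename_i Γ1 Γ2 x0 y T S M P O
    intro hs
    have hxy : x ≠ y := by rintro rfl; rw [hy] at hs; simp [Strippable] at hs
    rw [del_ne _ hxy]
    exact ih (by rwa [upd_ne _ _ hxy])

end Strengthening4
section Strengthening5

lemma strip_check {Γ1 : Ctx} {P : Proc} {Γ2 : Ctx} (h : Check Γ1 P Γ2) (x : String) :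
    Strippable (Γ1 x) → Check (stripCtx x Γ1) P (stripCtx x Γ2) := by
  induction h with
  | inact => exact fun _ => .inact _
  | par h1 h2 ih1 ih2 => exact fun hs => .par (ih1 hs) (ih2 (ck_pres h1 x hs))
  | repl h ih => exact fun hs => .repl (ih hs)
  | res hS hy hsub hO hU ih =>
    rename_i Γ1 Γ2 y T P O
    intro hs
    have hxy : x ≠ y := by rintro rfl; rw [hy] at hs; simp [Strippable] at hs
    have hyx : y ≠ x := fun e => hxy e.symm
    rw [strip_del_ne _ hyx]
    refine Check.res hS ?_ ?_ ?_ hU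
    · rw [strip_ne _ hyx]; exact hy
    · rw [← strip_upd_ne _ _ hyx]; exact ih (by rwa [upd_ne _ _ hxy])
    · rw [strip_ne _ hyx]; exact hO
  | outL hΓ hcv hck hΓ3 hM ih =>
    rename_i Γ1 Γ2 Γ3 x0 y T S P M
    intro hs
    by_cases hx : x = x0
    · subst hx; rw [hΓ] at hs; simp [Strippable] at hs
    · have hx0 : x0 ≠ x := fun e => hx e.symm
      rw [strip_upd_ne _ _ hx0]
      have hs1 : Strippable ((Γ1.upd x0 (.single .void)) x) := by rwa [upd_ne _ _ hx]
      have hcv' := strip_cv hcv x hs1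
      rw [strip_upd_ne _ _ hx0] at hcv'
      have hck' := ih (by have := cv_pres hcv x hs1; rwa [upd_ne _ _ hx])
      rw [strip_upd_ne _ _ hx0] at hck'
      refine Check.outL ?_ hcv' hck' ?_ hM
      · rw [strip_ne _ hx0]; exact hΓ
      · rw [strip_ne _ hx0]; exact hΓ3
  | outLl hΓ hck hΓ2 ih =>
    rename_i Γ1 Γ2 x0 y T S N P
    intro hs
    by_cases hx : x = x0
    · subst hx
      rw [hΓ] at hs; simp [Strippable] at hs; subst hs
      rw [strip_eq_chanR hΓ,
        strip_upd_at _ (show stripE (.chan .void .void) = some (.single .void) from rfl),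
        upd_eq_self hΓ2]
      exact hck
    · have hx0 : x0 ≠ x := fun e => hx e.symm
      rw [strip_upd_ne _ _ hx0]
      have hck' := ih (by rwa [upd_ne _ _ hx])
      rw [strip_upd_ne _ _ hx0] at hck'
      refine Check.outLl ?_ hck' ?_
      · rw [strip_ne _ hx0]; exact hΓ
      · rw [strip_ne _ hx0]; exact hΓ2
  | outLr hΓ hck hΓ2 ih =>
    rename_i Γ1 Γ2 x0 y T S M P
    intro hs
    by_cases hx : x = x0
    · subst hx
      rw [hΓ] at hs; simp [Strippable] at hs; subst hs
      rw [strip_eq_chanL hΓ,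
        strip_upd_at _ (show stripE (.chan .void .void) = some (.single .void) from rfl),
        upd_eq_self hΓ2]
      exact hck
    · have hx0 : x0 ≠ x := fun e => hx e.symm
      rw [strip_upd_ne _ _ hx0]
      have hck' := ih (by rwa [upd_ne _ _ hx])
      rw [strip_upd_ne _ _ hx0] at hck'
      refine Check.outLr ?_ hck' ?_
      · rw [strip_ne _ hx0]; exact hΓ
      · rw [strip_ne _ hx0]; exact hΓ2
  | outUn hΓ hUnf hcv hck ih =>
    rename_i Γ1 Γ2 Γ3 x0 y T S P
    intro hs
    by_cases hx : x = x0
    · subst hx; rw [hΓ] at hs; simp [Strippable] at hs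
    · have hx0 : x0 ≠ x := fun e => hx e.symm
      exact Check.outUn (by rw [strip_ne _ hx0]; exact hΓ) hUnf (strip_cv hcv x hs)
        (ih (cv_pres hcv x hs))
  | outUnl hΓ hUnf hcv hck ih =>
    rename_i Γ1 Γ2 Γ3 x0 y T S N P
    intro hs
    by_cases hx : x = x0
    · subst hx
      rw [hΓ] at hs; simp [Strippable] at hs; subst hs
      have hs' : Strippable (Γ1 x) := Or.inr (Or.inr ⟨_, hΓ⟩)
      exact Check.outUn (by simp [stripCtx, hΓ, stripE]) hUnf (strip_cv hcv x hs')
        (ih (cv_pres hcv x hs'))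
    · have hx0 : x0 ≠ x := fun e => hx e.symm
      exact Check.outUnl (by rw [strip_ne _ hx0]; exact hΓ) hUnf (strip_cv hcv x hs)
        (ih (cv_pres hcv x hs))
  | outUnr hΓ hUnf hcv hck ih =>
    rename_i Γ1 Γ2 Γ3 x0 y T S M P
    intro hs
    by_cases hx : x = x0
    · subst hx
      rw [hΓ] at hs; simp [Strippable] at hs; subst hs
      have hs' : Strippable (Γ1 x) := Or.inr (Or.inl ⟨_, hΓ⟩)
      exact Check.outUn (by simp [stripCtx, hΓ, stripE]) hUnf (strip_cv hcv x hs')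
        (ih (cv_pres hcv x hs'))
    · have hx0 : x0 ≠ x := fun e => hx e.symm
      exact Check.outUnr (by rw [strip_ne _ hx0]; exact hΓ) hUnf (strip_cv hcv x hs)
        (ih (cv_pres hcv x hs))
  | inL hΓ hy hck hΓx hM hΓy hO ih =>
    rename_i Γ1 Γ2 x0 y T S P M O
    intro hs
    by_cases hx : x = x0
    · subst hx; rw [hΓ] at hs; simp [Strippable] at hs
    · have hx0 : x0 ≠ x := fun e => hx e.symm
      have hxy : x ≠ y := by rintro rfl; rw [hy] at hs; simp [Strippable] at hs
      have hyx : y ≠ x := fun e => hxy e.symm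
      rw [strip_upd_ne _ _ hx0, strip_del_ne _ hyx]
      have hck' := ih (by rwa [upd_ne _ _ hxy, upd_ne _ _ hx])
      rw [strip_upd_ne _ _ hyx, strip_upd_ne _ _ hx0] at hck'
      refine Check.inL ?_ ?_ hck' ?_ hM ?_ hO
      · rw [strip_ne _ hx0]; exact hΓ
      · rw [strip_ne _ hyx]; exact hy
      · rw [strip_ne _ hx0]; exact hΓx
      · rw [strip_ne _ hyx]; exact hΓy
  | inLl hΓ hck hΓ2 ih =>
    rename_i Γ1 Γ2 x0 y T S N P
    intro hs
    by_cases hx : x = x0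
    · subst hx
      rw [hΓ] at hs; simp [Strippable] at hs; subst hs
      rw [strip_eq_chanR hΓ,
        strip_upd_at _ (show stripE (.chan .void .void) = some (.single .void) from rfl),
        upd_eq_self hΓ2]
      exact hck
    · have hx0 : x0 ≠ x := fun e => hx e.symm
      rw [strip_upd_ne _ _ hx0]
      have hck' := ih (by rwa [upd_ne _ _ hx])
      rw [strip_upd_ne _ _ hx0] at hck'
      refine Check.inLl ?_ hck' ?_
      · rw [strip_ne _ hx0]; exact hΓ
      · rw [strip_ne _ hx0]; exact hΓ2
  | inLr hΓ hck hΓ2 ih =>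
    rename_i Γ1 Γ2 x0 y T S M P
    intro hs
    by_cases hx : x = x0
    · subst hx
      rw [hΓ] at hs; simp [Strippable] at hs; subst hs
      rw [strip_eq_chanL hΓ,
        strip_upd_at _ (show stripE (.chan .void .void) = some (.single .void) from rfl),
        upd_eq_self hΓ2]
      exact hck
    · have hx0 : x0 ≠ x := fun e => hx e.symm
      rw [strip_upd_ne _ _ hx0]
      have hck' := ih (by rwa [upd_ne _ _ hx])
      rw [strip_upd_ne _ _ hx0] at hck'
      refine Check.inLr ?_ hck' ?_
      · rw [strip_ne _ hx0]; exact hΓ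
      · rw [strip_ne _ hx0]; exact hΓ2
  | inUn hΓ hUnf hy hck hΓy hO ih =>
    rename_i Γ1 Γ2 x0 y T S P O
    intro hs
    by_cases hx : x = x0
    · subst hx; rw [hΓ] at hs; simp [Strippable] at hs
    · have hx0 : x0 ≠ x := fun e => hx e.symm
      have hxy : x ≠ y := by rintro rfl; rw [hy] at hs; simp [Strippable] at hs
      have hyx : y ≠ x := fun e => hxy e.symm
      rw [strip_del_ne _ hyx]
      have hck' := ih (by rwa [upd_ne _ _ hxy])
      rw [strip_upd_ne _ _ hyx] at hck'
      refine Check.inUn ?_ hUnf ?_ hck' ?_ hO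
      · rw [strip_ne _ hx0]; exact hΓ
      · rw [strip_ne _ hyx]; exact hy
      · rw [strip_ne _ hyx]; exact hΓy
  | inUnl hΓ hUnf hy hck hΓy hO ih =>
    rename_i Γ1 Γ2 x0 y T S N P O
    intro hs
    have hxy : x ≠ y := by rintro rfl; rw [hy] at hs; simp [Strippable] at hs
    have hyx : y ≠ x := fun e => hxy e.symm
    rw [strip_del_ne _ hyx]
    by_cases hx : x = x0
    · subst hx
      rw [hΓ] at hs; simp [Strippable] at hs; subst hs
      have hs' : Strippable (Γ1 x) := Or.inr (Or.inr ⟨_, hΓ⟩)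
      have hck' := ih (by rwa [upd_ne _ _ hxy])
      rw [strip_upd_ne _ _ hyx] at hck'
      refine Check.inUn (by simp [stripCtx, hΓ, stripE]) hUnf ?_ hck' ?_ hO
      · rw [strip_ne _ hyx]; exact hy
      · rw [strip_ne _ hyx]; exact hΓy
    · have hx0 : x0 ≠ x := fun e => hx e.symm
      have hck' := ih (by rwa [upd_ne _ _ hxy])
      rw [strip_upd_ne _ _ hyx] at hck'
      refine Check.inUnl (N := N) ?_ hUnf ?_ hck' ?_ hO
      · rw [strip_ne _ hx0]; exact hΓ
      · rw [strip_ne _ hyx]; exact hy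
      · rw [strip_ne _ hyx]; exact hΓy
  | inUnr hΓ hUnf hy hck hΓy hO ih =>
    rename_i Γ1 Γ2 x0 y T S M P O
    intro hs
    have hxy : x ≠ y := by rintro rfl; rw [hy] at hs; simp [Strippable] at hs
    have hyx : y ≠ x := fun e => hxy e.symm
    rw [strip_del_ne _ hyx]
    by_cases hx : x = x0
    · subst hx
      rw [hΓ] at hs; simp [Strippable] at hs; subst hs
      have hs' : Strippable (Γ1 x) := Or.inr (Or.inl ⟨_, hΓ⟩)
      have hck' := ih (by rwa [upd_ne _ _ hxy])
      rw [strip_upd_ne _ _ hyx] at hck'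
      refine Check.inUn (by simp [stripCtx, hΓ, stripE]) hUnf ?_ hck' ?_ hO
      · rw [strip_ne _ hyx]; exact hy
      · rw [strip_ne _ hyx]; exact hΓy
    · have hx0 : x0 ≠ x := fun e => hx e.symm
      have hck' := ih (by rwa [upd_ne _ _ hxy])
      rw [strip_upd_ne _ _ hyx] at hck'
      refine Check.inUnr (M := M) ?_ hUnf ?_ hck' ?_ hO
      · rw [strip_ne _ hx0]; exact hΓ
      · rw [strip_ne _ hyx]; exact hy
      · rw [strip_ne _ hyx]; exact hΓy

end Strengthening5
/-- algorithmic strengthening for void entries and void components. -/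
theorem stmt5 {P : Proc} {x : String} :
    (∀ Γ1 Γ2 : Ctx, Check Γ1 P Γ2 →
      Γ1 x = some (.single .void) → Γ2 x = some (.single .void) →
      Check (Γ1.del x) P (Γ2.del x)) ∧
    (∀ (Γ1 Γ2 : Ctx) (N N' : Entry), Check Γ1 P Γ2 →
      Γ1 x = some (.chan .void N) → Γ2 x = some (.chan .void N') →
      Check (Γ1.upd x (.single N)) P (Γ2.upd x (.single N'))) ∧
    (∀ (Γ1 Γ2 : Ctx) (M M' : Entry), Check Γ1 P Γ2 →
      Γ1 x = some (.chan M .void) → Γ2 x = some (.chan M' .void) →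
      Check (Γ1.upd x (.single M)) P (Γ2.upd x (.single M'))) := by
  refine ⟨?_, ?_, ?_⟩
  · intro Γ1 Γ2 h h1 h2
    have := strip_check h x (Or.inl h1)
    rwa [strip_eq_of_void h1, strip_eq_of_void h2] at this
  · intro Γ1 Γ2 N N' h h1 h2
    have := strip_check h x (Or.inr (Or.inl ⟨N, h1⟩))
    rwa [strip_eq_chanL h1, strip_eq_chanL h2] at this
  · intro Γ1 Γ2 M M' h h1 h2
    have := strip_check h x (Or.inr (Or.inr ⟨M, h1⟩))
    rwa [strip_eq_chanR h1, strip_eq_chanR h2] at this
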